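/- Let T be a compact metric space, X a Hilbert space, (R_i)_{i≥1} ⊂ L(X) and Borel maps ω_i : T → T with Σ_{i=1}^∞ ‖R_i‖ < ∞. Then for every ν ∈ cabv(T,X), the series Σ_{i=1}^∞ R_i* ∘ ω_i(ν) converges absolutely in cabv(T,X) with the variation norm, and its sum μ satisfies ∫ f dμ = Σ_{i=1}^∞ ∫ (R_i ∘ f ∘ ω_i) dν for every continuous f : T → X. -/

import Mathlib

open MeasureTheory Filter Classical
open scoped ENNReal NNReal

/-- The total variation `|μ|(T)` of a vector measure. -/
noncomputable def totalVar {T X : Type*} [MeasurableSpace T] [NormedAddCommGroup X]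
    (μ : VectorMeasure T X) : ℝ≥0∞ :=
  ⨆ P ∈ {P : Finset (Set T) |
      (∀ A ∈ P, MeasurableSet A) ∧ (P : Set (Set T)).PairwiseDisjoint id},
    ∑ A ∈ P, (‖μ A‖₊ : ℝ≥0∞)

/-- The integral of a simple function against a vector measure:
`∫ (Σ φ_{A_i} x_i) dμ = Σ (x_i, μ(A_i))` (linear in the `x_i`, antilinear in `μ`). -/
noncomputable def simpleInt (𝕜 : Type*) {T X : Type*} [RCLike 𝕜] [MeasurableSpace T]
    [NormedAddCommGroup X] [InnerProductSpace 𝕜 X]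
    (μ : VectorMeasure T X) (g : SimpleFunc T X) : 𝕜 :=
  ∑ x ∈ g.range, (inner 𝕜 (μ (g ⁻¹' {x})) x : 𝕜)

/-- The sesquilinear uniform integral `∫ f dμ` of a totally measurable function `f`
(a uniform limit of simple functions) against a vector measure `μ`, extending the
simple-function integral by uniform limits (junk value `0` otherwise). -/
noncomputable def sesqInt (𝕜 : Type*) {T X : Type*} [RCLike 𝕜] [MeasurableSpace T]
    [NormedAddCommGroup X] [InnerProductSpace 𝕜 X]
    (μ : VectorMeasure T X) (f : T → X) : 𝕜 :=
  if h : ∃ g : ℕ → SimpleFunc T X, TendstoUniformly (fun n => ⇑(g n)) f atTop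
  then limUnder atTop (fun n => simpleInt 𝕜 μ (h.choose n))
  else 0

/-- `R* ∘ (ω(ν))`: the pushforward of `ν` under `ω` composed with the Hilbert
adjoint `R*`. -/
noncomputable def pushTerm {𝕜 T X : Type*} [RCLike 𝕜] [MeasurableSpace T]
    [NormedAddCommGroup X] [InnerProductSpace 𝕜 X] [CompleteSpace X]
    (R : X →L[𝕜] X) (ω : T → T) (ν : VectorMeasure T X) : VectorMeasure T X :=
  (ν.map ω).mapRange (ContinuousLinearMap.adjoint R).toLinearMap.toAddMonoidHom
    (ContinuousLinearMap.adjoint R).continuous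

section Part1

variable {T X : Type*} [MeasurableSpace T] [NormedAddCommGroup X]

lemma sum_nnnorm_le_totalVar (μ : VectorMeasure T X) {ι : Type*} {A : ι → Set T} {s : Finset ι}
    (hA : ∀ i ∈ s, MeasurableSet (A i))
    (hd : ∀ i ∈ s, ∀ j ∈ s, i ≠ j → Disjoint (A i) (A j)) :
    ∑ j ∈ s, (‖μ (A j)‖₊ : ℝ≥0∞) ≤ totalVar μ := by
  classical
  set s' := s.filter (fun j => A j ≠ ∅) with hs'
  have hsum : ∑ j ∈ s', (‖μ (A j)‖₊ : ℝ≥0∞) = ∑ j ∈ s, (‖μ (A j)‖₊ : ℝ≥0∞) := by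
    apply Finset.sum_filter_of_ne
    intro x hx hne
    intro hempty
    apply hne
    simp [hempty, μ.empty]
  have hinj : ∀ x ∈ s', ∀ y ∈ s', A x = A y → x = y := by
    intro x hx y hy hxy
    by_contra hne
    have hxs : x ∈ s := Finset.mem_filter.1 hx |>.1
    have hys : y ∈ s := Finset.mem_filter.1 hy |>.1
    have hd' := hd x hxs y hys hne
    rw [hxy] at hd'
    have : A y = ∅ := by
      simpa [Set.bot_eq_empty] using disjoint_self.1 hd'
    exact (Finset.mem_filter.1 hy |>.2) this
  have himg : ∑ B ∈ s'.image A, (‖μ B‖₊ : ℝ≥0∞) = ∑ j ∈ s', (‖μ (A j)‖₊ : ℝ≥0∞) :=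
    Finset.sum_image hinj
  have hmem : s'.image A ∈ {P : Finset (Set T) |
      (∀ B ∈ P, MeasurableSet B) ∧ (P : Set (Set T)).PairwiseDisjoint id} := by
    constructor
    · intro B hB
      obtain ⟨j, hj, rfl⟩ := Finset.mem_image.1 hB
      exact hA j (Finset.mem_filter.1 hj |>.1)
    · intro B hB C hC hne
      obtain ⟨j, hj, rfl⟩ := Finset.mem_image.1 (Finset.mem_coe.1 hB)
      obtain ⟨k, hk, rfl⟩ := Finset.mem_image.1 (Finset.mem_coe.1 hC)
      have hjk : j ≠ k := fun h => hne (by rw [h])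
      exact hd j (Finset.mem_filter.1 hj |>.1) k (Finset.mem_filter.1 hk |>.1) hjk
  calc ∑ j ∈ s, (‖μ (A j)‖₊ : ℝ≥0∞) = ∑ B ∈ s'.image A, (‖μ B‖₊ : ℝ≥0∞) := by
        rw [himg, hsum]
    _ ≤ totalVar μ :=
        le_iSup₂_of_le (s'.image A) hmem le_rfl

lemma nnnorm_le_totalVar (μ : VectorMeasure T X) {A : Set T} (hA : MeasurableSet A) :
    (‖μ A‖₊ : ℝ≥0∞) ≤ totalVar μ := by
  have := sum_nnnorm_le_totalVar μ (A := fun _ : Unit => A) (s := {Unit.unit})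
    (by simpa using hA) (by simp)
  simpa using this

lemma tsum_nnnorm_le_totalVar (μ : VectorMeasure T X) {A : ℕ → Set T}
    (hA : ∀ i, MeasurableSet (A i)) (hd : Pairwise (Function.onFun Disjoint A)) :
    ∑' j, (‖μ (A j)‖₊ : ℝ≥0∞) ≤ totalVar μ := by
  rw [ENNReal.tsum_eq_iSup_sum]
  exact iSup_le fun s => sum_nnnorm_le_totalVar μ (fun i _ => hA i)
    (fun i _ j _ hij => hd hij)

lemma totalVar_add_le (μ₁ μ₂ : VectorMeasure T X) :
    totalVar (μ₁ + μ₂) ≤ totalVar μ₁ + totalVar μ₂ := by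
  apply iSup₂_le
  intro P hP
  calc ∑ A ∈ P, (‖(μ₁ + μ₂) A‖₊ : ℝ≥0∞)
      ≤ ∑ A ∈ P, ((‖μ₁ A‖₊ : ℝ≥0∞) + (‖μ₂ A‖₊ : ℝ≥0∞)) := by
        apply Finset.sum_le_sum
        intro A _
        rw [VectorMeasure.add_apply]
        exact_mod_cast ENNReal.coe_le_coe.2 (nnnorm_add_le _ _)
    _ = ∑ A ∈ P, (‖μ₁ A‖₊ : ℝ≥0∞) + ∑ A ∈ P, (‖μ₂ A‖₊ : ℝ≥0∞) := Finset.sum_add_distrib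
    _ ≤ totalVar μ₁ + totalVar μ₂ := by
        gcongr
        · exact le_iSup₂_of_le P hP le_rfl
        · exact le_iSup₂_of_le P hP le_rfl

lemma totalVar_zero : totalVar (0 : VectorMeasure T X) = 0 := by
  apply le_antisymm _ (zero_le)
  apply iSup₂_le
  intro P _
  simp [VectorMeasure.zero_apply]

lemma totalVar_sum_le {ι : Type*} (σ : ι → VectorMeasure T X) (s : Finset ι) :
    totalVar (∑ i ∈ s, σ i) ≤ ∑ i ∈ s, totalVar (σ i) := by
  classical
  induction s using Finset.induction_on with
  | empty => simp [totalVar_zero]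
  | insert a s ha ih =>
    rw [Finset.sum_insert ha, Finset.sum_insert ha]
    exact (totalVar_add_le _ _).trans (by gcongr)

end Part1

section Part3

variable {𝕜 T X : Type*} [RCLike 𝕜] [MeasurableSpace T]
  [NormedAddCommGroup X] [InnerProductSpace 𝕜 X]

/-- A vector measure is finitely additive on disjoint measurable families. -/
lemma vm_biUnion (μ : VectorMeasure T X) {ι : Type*} (s : Finset ι) (A : ι → Set T)
    (hA : ∀ i ∈ s, MeasurableSet (A i))
    (hd : ∀ i ∈ s, ∀ j ∈ s, i ≠ j → Disjoint (A i) (A j)) :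
    μ (⋃ i ∈ s, A i) = ∑ i ∈ s, μ (A i) := by
  classical
  induction s using Finset.induction_on with
  | empty => simp [μ.empty]
  | insert a s ha ih =>
    rw [Finset.sum_insert ha, Finset.set_biUnion_insert]
    rw [VectorMeasure.of_union ?hdisj (hA a (Finset.mem_insert_self a s))
      (Finset.measurableSet_biUnion s (fun b hb => hA b (Finset.mem_insert_of_mem hb)))]
    · rw [ih (fun i hi => hA i (Finset.mem_insert_of_mem hi))
        (fun i hi j hj hij => hd i (Finset.mem_insert_of_mem hi) j
          (Finset.mem_insert_of_mem hj) hij)]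
    case hdisj =>
      apply Set.disjoint_iUnion₂_right.2
      intro b hb
      exact hd a (Finset.mem_insert_self a s) b (Finset.mem_insert_of_mem hb)
        (fun h => ha (h ▸ hb))

lemma simpleInt_map (μ : VectorMeasure T X) {Y : Type*} (p : SimpleFunc T Y) (φ : Y → X) :
    simpleInt 𝕜 μ (p.map φ) = ∑ y ∈ p.range, (inner 𝕜 (μ (⇑p ⁻¹' {y})) (φ y) : 𝕜) := by
  classical
  have hpre : ∀ z : X, ⇑(p.map φ) ⁻¹' {z} = ⋃ y ∈ {b ∈ p.range | φ b = z}, ⇑p ⁻¹' {y} := by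
    intro z
    rw [SimpleFunc.map_preimage_singleton]
    ext t
    simp [Set.mem_iUnion]
  have hμpre : ∀ z : X, μ (⇑(p.map φ) ⁻¹' {z})
      = ∑ y ∈ {b ∈ p.range | φ b = z}, μ (⇑p ⁻¹' {y}) := by
    intro z
    rw [hpre z]
    exact vm_biUnion μ _ _ (fun y _ => p.measurableSet_fiber y)
      (fun y _ y' _ hyy' => Disjoint.preimage _ (Set.disjoint_singleton.2 hyy'))
  calc simpleInt 𝕜 μ (p.map φ)
      = ∑ z ∈ (p.map φ).range, ∑ y ∈ {b ∈ p.range | φ b = z},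
          (inner 𝕜 (μ (⇑p ⁻¹' {y})) z : 𝕜) := by
        unfold simpleInt
        apply Finset.sum_congr rfl
        intro z _
        rw [hμpre z, sum_inner]
    _ = ∑ z ∈ (p.map φ).range, ∑ y ∈ {b ∈ p.range | φ b = z},
          (inner 𝕜 (μ (⇑p ⁻¹' {y})) (φ y) : 𝕜) := by
        apply Finset.sum_congr rfl
        intro z _
        apply Finset.sum_congr rfl
        intro y hy
        rw [(Finset.mem_filter.1 hy).2]
    _ = ∑ y ∈ p.range, (inner 𝕜 (μ (⇑p ⁻¹' {y})) (φ y) : 𝕜) := by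
        apply Finset.sum_fiberwise_of_maps_to
        intro y hy
        rw [SimpleFunc.range_map]
        exact Finset.mem_image_of_mem φ hy

lemma simpleInt_eq_pair_fst (μ : VectorMeasure T X) (g g' : SimpleFunc T X) :
    simpleInt 𝕜 μ g = ∑ y ∈ (g.pair g').range, (inner 𝕜 (μ (⇑(g.pair g') ⁻¹' {y})) y.1 : 𝕜) := by
  have : (g.pair g').map Prod.fst = g := by
    apply SimpleFunc.coe_injective
    ext t
    rfl
  calc simpleInt 𝕜 μ g = simpleInt 𝕜 μ ((g.pair g').map Prod.fst) := by rw [this]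
    _ = _ := simpleInt_map μ (g.pair g') Prod.fst

lemma simpleInt_eq_pair_snd (μ : VectorMeasure T X) (g g' : SimpleFunc T X) :
    simpleInt 𝕜 μ g' = ∑ y ∈ (g.pair g').range, (inner 𝕜 (μ (⇑(g.pair g') ⁻¹' {y})) y.2 : 𝕜) := by
  have : (g.pair g').map Prod.snd = g' := by
    apply SimpleFunc.coe_injective
    ext t
    rfl
  calc simpleInt 𝕜 μ g' = simpleInt 𝕜 μ ((g.pair g').map Prod.snd) := by rw [this]
    _ = _ := simpleInt_map μ (g.pair g') Prod.snd

lemma sum_norm_fiber_le (μ : VectorMeasure T X) (hμ : totalVar μ ≠ ⊤) {Y : Type*}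
    (p : SimpleFunc T Y) :
    ∑ y ∈ p.range, ‖μ (⇑p ⁻¹' {y})‖ ≤ (totalVar μ).toReal := by
  have h := sum_nnnorm_le_totalVar μ (A := fun y => ⇑p ⁻¹' {y}) (s := p.range)
    (fun y _ => p.measurableSet_fiber y)
    (fun y _ y' _ hyy' => Disjoint.preimage _ (Set.disjoint_singleton.2 hyy'))
  have h2 := ENNReal.toReal_mono hμ h
  rw [ENNReal.toReal_sum (fun y _ => ENNReal.coe_ne_top)] at h2
  simpa using h2

lemma norm_simpleInt_sub_le (μ : VectorMeasure T X) (hμ : totalVar μ ≠ ⊤)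
    (g g' : SimpleFunc T X) {c : ℝ} (hc0 : 0 ≤ c) (hc : ∀ t, ‖g t - g' t‖ ≤ c) :
    ‖simpleInt 𝕜 μ g - simpleInt 𝕜 μ g'‖ ≤ c * (totalVar μ).toReal := by
  rw [simpleInt_eq_pair_fst μ g g', simpleInt_eq_pair_snd μ g g', ← Finset.sum_sub_distrib]
  have hterm : ∀ y ∈ (g.pair g').range,
      ‖(inner 𝕜 (μ (⇑(g.pair g') ⁻¹' {y})) y.1 : 𝕜) - inner 𝕜 (μ (⇑(g.pair g') ⁻¹' {y})) y.2‖
        ≤ ‖μ (⇑(g.pair g') ⁻¹' {y})‖ * c := by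
    intro y hy
    rw [← inner_sub_right]
    obtain ⟨t, ht⟩ := SimpleFunc.mem_range.1 hy
    calc ‖(inner 𝕜 (μ (⇑(g.pair g') ⁻¹' {y})) (y.1 - y.2) : 𝕜)‖
        ≤ ‖μ (⇑(g.pair g') ⁻¹' {y})‖ * ‖y.1 - y.2‖ := norm_inner_le_norm _ _
      _ ≤ ‖μ (⇑(g.pair g') ⁻¹' {y})‖ * c := by
          apply mul_le_mul_of_nonneg_left _ (norm_nonneg _)
          have h1 : y.1 = g t := by rw [← ht]; rfl
          have h2 : y.2 = g' t := by rw [← ht]; rfl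
          rw [h1, h2]
          exact hc t
  calc ‖∑ y ∈ (g.pair g').range,
        ((inner 𝕜 (μ (⇑(g.pair g') ⁻¹' {y})) y.1 : 𝕜) - inner 𝕜 (μ (⇑(g.pair g') ⁻¹' {y})) y.2)‖
      ≤ ∑ y ∈ (g.pair g').range, ‖μ (⇑(g.pair g') ⁻¹' {y})‖ * c :=
        norm_sum_le_of_le _ hterm
    _ = (∑ y ∈ (g.pair g').range, ‖μ (⇑(g.pair g') ⁻¹' {y})‖) * c := by
        rw [Finset.sum_mul]
    _ ≤ (totalVar μ).toReal * c := by
        apply mul_le_mul_of_nonneg_right (sum_norm_fiber_le μ hμ _) hc0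
    _ = c * (totalVar μ).toReal := mul_comm _ _

lemma simpleInt_zero_fn (μ : VectorMeasure T X) :
    simpleInt 𝕜 μ (0 : SimpleFunc T X) = 0 := by
  unfold simpleInt
  apply Finset.sum_eq_zero
  intro x hx
  have : x = 0 := by
    obtain ⟨t, ht⟩ := SimpleFunc.mem_range.1 hx
    rw [← ht]; rfl
  rw [this, inner_zero_right]

lemma norm_simpleInt_le (μ : VectorMeasure T X) (hμ : totalVar μ ≠ ⊤)
    (g : SimpleFunc T X) {c : ℝ} (hc0 : 0 ≤ c) (hc : ∀ t, ‖g t‖ ≤ c) :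
    ‖simpleInt 𝕜 μ g‖ ≤ c * (totalVar μ).toReal := by
  have := norm_simpleInt_sub_le (𝕜 := 𝕜) μ hμ g (0 : SimpleFunc T X) hc0
    (fun t => by simpa using hc t)
  simpa [simpleInt_zero_fn] using this

lemma simpleInt_add_measure (μ₁ μ₂ : VectorMeasure T X) (g : SimpleFunc T X) :
    simpleInt 𝕜 (μ₁ + μ₂) g = simpleInt 𝕜 μ₁ g + simpleInt 𝕜 μ₂ g := by
  unfold simpleInt
  rw [← Finset.sum_add_distrib]
  apply Finset.sum_congr rfl
  intro x _
  rw [VectorMeasure.add_apply, inner_add_left]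

lemma simpleInt_zero_measure (g : SimpleFunc T X) :
    simpleInt 𝕜 (0 : VectorMeasure T X) g = 0 := by
  unfold simpleInt
  apply Finset.sum_eq_zero
  intro x _
  rw [VectorMeasure.zero_apply, inner_zero_left]

end Part3

section Part2

variable {T X : Type*} [MeasurableSpace T] [NormedAddCommGroup X] [CompleteSpace X]

lemma summable_apply_of_tsum_totalVar_ne_top (μs : ℕ → VectorMeasure T X)
    (h : ∑' i, totalVar (μs i) ≠ ⊤) (A : Set T) (hA : MeasurableSet A) :
    Summable fun i => μs i A := by
  apply Summable.of_nnnorm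
  rw [← ENNReal.tsum_coe_ne_top_iff_summable]
  exact ne_top_of_le_ne_top h (ENNReal.tsum_le_tsum fun i => nnnorm_le_totalVar (μs i) hA)

noncomputable def seriesMeasure (μs : ℕ → VectorMeasure T X)
    (h : ∑' i, totalVar (μs i) ≠ ⊤) : VectorMeasure T X where
  measureOf' A := ∑' i, μs i A
  empty' := by simp [VectorMeasure.empty]
  not_measurable' A hA := by simp [VectorMeasure.not_measurable _ hA]
  m_iUnion' := by
    intro A hA hd
    -- the doubly-indexed family is absolutely summable
    set G : ℕ × ℕ → X := fun p => μs p.2 (A p.1) with hG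
    have hGs : Summable G := by
      apply Summable.of_nnnorm
      rw [← ENNReal.tsum_coe_ne_top_iff_summable]
      rw [ENNReal.tsum_prod (f := fun j i => (‖μs i (A j)‖₊ : ℝ≥0∞))]
      rw [ENNReal.tsum_comm]
      refine ne_top_of_le_ne_top h (ENNReal.tsum_le_tsum fun i => ?_)
      exact tsum_nnnorm_le_totalVar (μs i) hA hd
    have hfib : ∀ j, HasSum (fun i => G (j, i)) (∑' i, μs i (A j)) :=
      fun j => (hGs.prod_factor j).hasSum
    have hmain : HasSum (fun j => ∑' i, μs i (A j)) (∑' p, G p) :=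
      hGs.hasSum.prod_fiberwise hfib
    have hswap : ∑' p, G p = ∑' i, μs i (⋃ j, A j) := by
      have h1 : ∑' p, G p = ∑' (p : ℕ × ℕ), G ((Equiv.prodComm ℕ ℕ) p) :=
        ((Equiv.prodComm ℕ ℕ).tsum_eq G).symm
      rw [h1]
      have h2 : ∑' (p : ℕ × ℕ), G ((Equiv.prodComm ℕ ℕ) p)
          = ∑' i, ∑' j, μs i (A j) := by
        have := Summable.tsum_prod' hGs.prod_symm (fun i => hGs.prod_symm.prod_factor i)
        simpa [Function.comp, Equiv.prodComm] using this
      rw [h2]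
      congr 1
      ext i
      exact ((μs i).hasSum_of_disjoint_iUnion hA hd).tsum_eq
    rw [hswap] at hmain
    exact hmain

lemma seriesMeasure_apply (μs : ℕ → VectorMeasure T X)
    (h : ∑' i, totalVar (μs i) ≠ ⊤) (A : Set T) :
    seriesMeasure μs h A = ∑' i, μs i A := rfl

lemma totalVar_seriesMeasure_le (μs : ℕ → VectorMeasure T X)
    (h : ∑' i, totalVar (μs i) ≠ ⊤) :
    totalVar (seriesMeasure μs h) ≤ ∑' i, totalVar (μs i) := by
  rw [totalVar]
  apply iSup₂_le
  intro P hP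
  have hPm := hP.1
  have hPd := hP.2
  calc ∑ A ∈ P, (‖seriesMeasure μs h A‖₊ : ℝ≥0∞)
      ≤ ∑ A ∈ P, ∑' i, (‖μs i A‖₊ : ℝ≥0∞) := by
        apply Finset.sum_le_sum
        intro A hA
        rw [seriesMeasure_apply]
        have hsummable : Summable fun i => ‖μs i A‖₊ := by
          rw [← ENNReal.tsum_coe_ne_top_iff_summable]
          exact ne_top_of_le_ne_top h (ENNReal.tsum_le_tsum fun i =>
            nnnorm_le_totalVar (μs i) (hPm A hA))
        calc ((‖∑' i, μs i A‖₊ : ℝ≥0) : ℝ≥0∞)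
            ≤ ((∑' i, ‖μs i A‖₊ : ℝ≥0) : ℝ≥0∞) :=
              ENNReal.coe_le_coe.2 (nnnorm_tsum_le hsummable)
          _ = ∑' i, (‖μs i A‖₊ : ℝ≥0∞) := ENNReal.coe_tsum hsummable
    _ = ∑' i, ∑ A ∈ P, (‖μs i A‖₊ : ℝ≥0∞) := by
        rw [Summable.tsum_finsetSum (fun A _ => ENNReal.summable)]
    _ ≤ ∑' i, totalVar (μs i) := by
        apply ENNReal.tsum_le_tsum
        intro i
        exact sum_nnnorm_le_totalVar (μs i) (A := id) (fun B hB => hPm B hB)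
          (fun B hB C hC hne => hPd hB hC hne)

end Part2

section Part4

variable {𝕜 T X : Type*} [RCLike 𝕜] [MeasurableSpace T]
  [NormedAddCommGroup X] [InnerProductSpace 𝕜 X]

lemma tendsto_simpleInt_sub_zero (μ : VectorMeasure T X) (hμ : totalVar μ ≠ ⊤)
    {f : T → X} {g g' : ℕ → SimpleFunc T X}
    (hg : TendstoUniformly (fun n => ⇑(g n)) f atTop)
    (hg' : TendstoUniformly (fun n => ⇑(g' n)) f atTop) :
    Tendsto (fun n => simpleInt 𝕜 μ (g n) - simpleInt 𝕜 μ (g' n)) atTop (nhds 0) := by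
  rw [NormedAddCommGroup.tendsto_nhds_zero]
  intro ε hε
  set V := (totalVar μ).toReal with hV
  have hV0 : 0 ≤ V := ENNReal.toReal_nonneg
  set δ := ε / (2 * (V + 1)) with hδdef
  have hδ : 0 < δ := by positivity
  have h1 := Metric.tendstoUniformly_iff.1 hg δ hδ
  have h2 := Metric.tendstoUniformly_iff.1 hg' δ hδ
  filter_upwards [h1, h2] with n hn hn'
  have hc : ∀ t, ‖(g n) t - (g' n) t‖ ≤ 2 * δ := by
    intro t
    have ha := hn t
    have hb := hn' t
    have h3 := dist_triangle ((g n) t) (f t) ((g' n) t)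
    rw [dist_comm ((g n) t) (f t)] at h3
    rw [← dist_eq_norm]
    linarith
  have hbound := norm_simpleInt_sub_le (𝕜 := 𝕜) μ hμ (g n) (g' n)
    (by positivity : (0:ℝ) ≤ 2 * δ) hc
  have harith : 2 * δ * V < ε := by
    have hcancel : δ * (2 * (V + 1)) = ε := by
      rw [hδdef]
      field_simp
    nlinarith
  calc ‖simpleInt 𝕜 μ (g n) - simpleInt 𝕜 μ (g' n)‖ ≤ 2 * δ * V := hbound
    _ < ε := harith

lemma exists_tendsto_simpleInt (μ : VectorMeasure T X) (hμ : totalVar μ ≠ ⊤)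
    {f : T → X} {g : ℕ → SimpleFunc T X}
    (hg : TendstoUniformly (fun n => ⇑(g n)) f atTop) :
    ∃ L : 𝕜, Tendsto (fun n => simpleInt 𝕜 μ (g n)) atTop (nhds L) := by
  apply cauchySeq_tendsto_of_complete
  rw [Metric.cauchySeq_iff]
  intro ε hε
  set V := (totalVar μ).toReal with hV
  have hV0 : 0 ≤ V := ENNReal.toReal_nonneg
  set δ := ε / (2 * (V + 1)) with hδdef
  have hδ : 0 < δ := by positivity
  obtain ⟨N, hN⟩ := (eventually_atTop).1 (Metric.tendstoUniformly_iff.1 hg δ hδ)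
  refine ⟨N, fun m hm n hn => ?_⟩
  have hc : ∀ t, ‖(g m) t - (g n) t‖ ≤ 2 * δ := by
    intro t
    have ha := hN m hm t
    have hb := hN n hn t
    have h3 := dist_triangle ((g m) t) (f t) ((g n) t)
    rw [dist_comm ((g m) t) (f t)] at h3
    rw [← dist_eq_norm]
    linarith
  have hbound := norm_simpleInt_sub_le (𝕜 := 𝕜) μ hμ (g m) (g n)
    (by positivity : (0:ℝ) ≤ 2 * δ) hc
  have harith : 2 * δ * V < ε := by
    have hcancel : δ * (2 * (V + 1)) = ε := by
      rw [hδdef]; field_simp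
    nlinarith
  rw [dist_eq_norm]
  exact lt_of_le_of_lt hbound harith

lemma sesqInt_eq_of_tendsto (μ : VectorMeasure T X) (hμ : totalVar μ ≠ ⊤)
    {f : T → X} {g : ℕ → SimpleFunc T X}
    (hg : TendstoUniformly (fun n => ⇑(g n)) f atTop) {L : 𝕜}
    (hL : Tendsto (fun n => simpleInt 𝕜 μ (g n)) atTop (nhds L)) :
    sesqInt 𝕜 μ f = L := by
  have hex : ∃ g' : ℕ → SimpleFunc T X, TendstoUniformly (fun n => ⇑(g' n)) f atTop := ⟨g, hg⟩
  rw [sesqInt, dif_pos hex]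
  have hg' := hex.choose_spec
  have hdiff := tendsto_simpleInt_sub_zero (𝕜 := 𝕜) μ hμ hg' hg
  have : Tendsto (fun n => simpleInt 𝕜 μ (hex.choose n)) atTop (nhds L) := by
    have := hdiff.add hL
    simpa using this
  exact this.limUnder_eq

lemma norm_sesqInt_le (μ : VectorMeasure T X) (hμ : totalVar μ ≠ ⊤)
    {f : T → X} {g : ℕ → SimpleFunc T X}
    (hg : TendstoUniformly (fun n => ⇑(g n)) f atTop)
    {c : ℝ} (hc0 : 0 ≤ c) (hfc : ∀ t, ‖f t‖ ≤ c) :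
    ‖sesqInt 𝕜 μ f‖ ≤ c * (totalVar μ).toReal := by
  obtain ⟨L, hL⟩ := exists_tendsto_simpleInt (𝕜 := 𝕜) μ hμ hg
  rw [sesqInt_eq_of_tendsto μ hμ hg hL]
  set V := (totalVar μ).toReal with hV
  have hV0 : 0 ≤ V := ENNReal.toReal_nonneg
  have key : ∀ ε : ℝ, 0 < ε → ‖L‖ ≤ (c + ε) * V := by
    intro ε hε
    have hLn : Tendsto (fun n => ‖simpleInt 𝕜 μ (g n)‖) atTop (nhds ‖L‖) := hL.norm
    apply le_of_tendsto hLn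
    have h1 := Metric.tendstoUniformly_iff.1 hg ε hε
    filter_upwards [h1] with n hn
    apply norm_simpleInt_le (𝕜 := 𝕜) μ hμ (g n) (by positivity)
    intro t
    have := hn t
    rw [dist_eq_norm] at this
    have h4 : ‖(g n) t‖ - ‖f t‖ ≤ ‖(g n) t - f t‖ := norm_sub_norm_le _ _
    rw [norm_sub_rev] at h4
    have h5 := hfc t
    linarith
  by_contra hcon
  push_neg at hcon
  rcases eq_or_lt_of_le hV0 with hV0' | hV0'
  · rw [← hV0'] at hcon
    simp only [mul_zero] at hcon
    have := key 1 one_pos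
    rw [← hV0', mul_zero] at this
    exact absurd this (not_le.2 hcon)
  · set ε := (‖L‖ - c * V) / (2 * V) with hεdef
    have hε : 0 < ε := by
      apply div_pos _ (by positivity)
      linarith
    have := key ε hε
    have hexp : (c + ε) * V = c * V + ε * V := by ring
    have hεV : ε * V = (‖L‖ - c * V) / 2 := by
      rw [hεdef]
      field_simp
    rw [hexp, hεV] at this
    linarith

lemma sesqInt_add_measure (μ₁ μ₂ : VectorMeasure T X)
    (hμ₁ : totalVar μ₁ ≠ ⊤) (hμ₂ : totalVar μ₂ ≠ ⊤)
    (hadd : totalVar (μ₁ + μ₂) ≠ ⊤)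
    {f : T → X} {g : ℕ → SimpleFunc T X}
    (hg : TendstoUniformly (fun n => ⇑(g n)) f atTop) :
    sesqInt 𝕜 (μ₁ + μ₂) f = sesqInt 𝕜 μ₁ f + sesqInt 𝕜 μ₂ f := by
  obtain ⟨L₁, hL₁⟩ := exists_tendsto_simpleInt (𝕜 := 𝕜) μ₁ hμ₁ hg
  obtain ⟨L₂, hL₂⟩ := exists_tendsto_simpleInt (𝕜 := 𝕜) μ₂ hμ₂ hg
  have hsum : Tendsto (fun n => simpleInt 𝕜 (μ₁ + μ₂) (g n)) atTop (nhds (L₁ + L₂)) := by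
    have := hL₁.add hL₂
    apply this.congr
    intro n
    rw [simpleInt_add_measure]
  rw [sesqInt_eq_of_tendsto _ hadd hg hsum, sesqInt_eq_of_tendsto _ hμ₁ hg hL₁,
    sesqInt_eq_of_tendsto _ hμ₂ hg hL₂]

end Part4

section Part5

variable {𝕜 T X : Type*} [RCLike 𝕜] [MeasurableSpace T]
  [NormedAddCommGroup X] [InnerProductSpace 𝕜 X] [CompleteSpace X]

lemma pushTerm_apply (R : X →L[𝕜] X) {ω : T → T} (hω : Measurable ω)
    (ν : VectorMeasure T X) {A : Set T} (hA : MeasurableSet A) :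
    pushTerm R ω ν A = (ContinuousLinearMap.adjoint R) (ν (ω ⁻¹' A)) := by
  unfold pushTerm
  change (ContinuousLinearMap.adjoint R) ((ν.map ω) A) = _
  rw [VectorMeasure.map_apply _ hω hA]

lemma totalVar_pushTerm_le (R : X →L[𝕜] X) {ω : T → T} (hω : Measurable ω)
    (ν : VectorMeasure T X) :
    totalVar (pushTerm R ω ν) ≤ (‖R‖₊ : ℝ≥0∞) * totalVar ν := by
  rw [totalVar]
  apply iSup₂_le
  intro P hP
  have hnorm : ‖ContinuousLinearMap.adjoint R‖₊ = ‖R‖₊ := by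
    ext
    exact (ContinuousLinearMap.adjoint (𝕜 := 𝕜) (E := X) (F := X)).norm_map R
  calc ∑ A ∈ P, (‖pushTerm R ω ν A‖₊ : ℝ≥0∞)
      ≤ ∑ A ∈ P, (‖R‖₊ : ℝ≥0∞) * (‖ν (ω ⁻¹' A)‖₊ : ℝ≥0∞) := by
        apply Finset.sum_le_sum
        intro A hA
        rw [pushTerm_apply R hω ν (hP.1 A hA)]
        have := (ContinuousLinearMap.adjoint R).le_opNNNorm (ν (ω ⁻¹' A))
        rw [hnorm] at this
        calc (‖(ContinuousLinearMap.adjoint R) (ν (ω ⁻¹' A))‖₊ : ℝ≥0∞)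
            ≤ ((‖R‖₊ * ‖ν (ω ⁻¹' A)‖₊ : ℝ≥0) : ℝ≥0∞) := ENNReal.coe_le_coe.2 this
          _ = (‖R‖₊ : ℝ≥0∞) * (‖ν (ω ⁻¹' A)‖₊ : ℝ≥0∞) := by simp
    _ = (‖R‖₊ : ℝ≥0∞) * ∑ A ∈ P, (‖ν (ω ⁻¹' A)‖₊ : ℝ≥0∞) := (Finset.mul_sum _ _ _).symm
    _ ≤ (‖R‖₊ : ℝ≥0∞) * totalVar ν := by
        apply mul_le_mul_right
        exact sum_nnnorm_le_totalVar ν (A := fun B => ω ⁻¹' B) (s := P)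
          (fun B hB => hω (hP.1 B hB))
          (fun B hB C hC hne => Disjoint.preimage ω (hP.2 hB hC hne))

lemma simpleInt_pushTerm (R : X →L[𝕜] X) {ω : T → T} (hω : Measurable ω)
    (ν : VectorMeasure T X) (g : SimpleFunc T X) :
    simpleInt 𝕜 (pushTerm R ω ν) g = simpleInt 𝕜 ν ((g.comp ω hω).map R) := by
  classical
  rw [simpleInt_map ν (g.comp ω hω) R]
  unfold simpleInt
  have hfib : ∀ x : X, ⇑(g.comp ω hω) ⁻¹' {x} = ω ⁻¹' (⇑g ⁻¹' {x}) := by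
    intro x
    rw [SimpleFunc.coe_comp, Set.preimage_comp]
  have hmain : ∀ x ∈ g.range,
      (inner 𝕜 (pushTerm R ω ν (⇑g ⁻¹' {x})) x : 𝕜)
        = inner 𝕜 (ν (⇑(g.comp ω hω) ⁻¹' {x})) (R x) := by
    intro x _
    rw [pushTerm_apply R hω ν (g.measurableSet_fiber x), hfib x]
    exact ContinuousLinearMap.adjoint_inner_left R x _
  rw [Finset.sum_congr rfl hmain]
  symm
  apply Finset.sum_subset (SimpleFunc.range_comp_subset_range g hω)
  intro x _ hx
  have hempty : ⇑(g.comp ω hω) ⁻¹' {x} = ∅ := by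
    rw [Set.preimage_singleton_eq_empty]
    intro hmem
    exact hx (SimpleFunc.mem_range.2 hmem)
  rw [hempty, (ν).empty, inner_zero_left]

omit [CompleteSpace X] in
lemma tendstoUniformly_comp_map (R : X →L[𝕜] X) {ω : T → T} (hω : Measurable ω)
    {f : T → X} {g : ℕ → SimpleFunc T X}
    (hg : TendstoUniformly (fun n => ⇑(g n)) f atTop) :
    TendstoUniformly (fun n => ⇑(((g n).comp ω hω).map R)) (fun t => R (f (ω t))) atTop := by
  rw [Metric.tendstoUniformly_iff]
  intro ε hε
  set δ := ε / (‖R‖ + 1) with hδdef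
  have hR0 : (0:ℝ) ≤ ‖R‖ := norm_nonneg _
  have hδ : 0 < δ := by positivity
  filter_upwards [Metric.tendstoUniformly_iff.1 hg δ hδ] with n hn t
  have := hn (ω t)
  rw [dist_eq_norm] at this ⊢
  have hcoe : (((g n).comp ω hω).map R) t = R ((g n) (ω t)) := rfl
  rw [hcoe]
  calc ‖R (f (ω t)) - R ((g n) (ω t))‖ = ‖R (f (ω t) - (g n) (ω t))‖ := by rw [map_sub]
    _ ≤ ‖R‖ * ‖f (ω t) - (g n) (ω t)‖ := R.le_opNorm _
    _ ≤ ‖R‖ * δ := by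
        apply mul_le_mul_of_nonneg_left (le_of_lt this) hR0
    _ < ε := by
        have hcancel : δ * (‖R‖ + 1) = ε := by rw [hδdef]; field_simp
        nlinarith

end Part5

section Part6

variable {T X : Type*} [MetricSpace T] [CompactSpace T] [MeasurableSpace T]
  [OpensMeasurableSpace T] [NormedAddCommGroup X]

/-- Piecewise-constant approximation built from a list of ball centers. -/
noncomputable def approxAux (f : T → X) (δ : ℝ) : List T → SimpleFunc T X
  | [] => SimpleFunc.const T 0
  | c :: l => SimpleFunc.piecewise (Metric.ball c δ) Metric.isOpen_ball.measurableSet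
      (SimpleFunc.const T (f c)) (approxAux f δ l)

lemma approxAux_spec (f : T → X) (δ : ℝ) (l : List T) (t : T)
    (h : ∃ c ∈ l, t ∈ Metric.ball c δ) :
    ∃ c, dist t c < δ ∧ (approxAux f δ l) t = f c := by
  induction l with
  | nil => simp at h
  | cons c l ih =>
    by_cases hmem : t ∈ Metric.ball c δ
    · refine ⟨c, ?_, ?_⟩
      · simpa [Metric.mem_ball] using hmem
      · simp [approxAux, SimpleFunc.piecewise_apply, hmem]
    · obtain ⟨c', hc', hm'⟩ := h
      have hc'l : c' ∈ l := by
        rcases List.mem_cons.1 hc' with rfl | h'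
        · exact absurd hm' hmem
        · exact h'
      obtain ⟨c'', h1, h2⟩ := ih ⟨c', hc'l, hm'⟩
      refine ⟨c'', h1, ?_⟩
      simp only [approxAux, SimpleFunc.piecewise_apply, hmem, if_false]
      exact h2

lemma exists_simple_unif_close (f : T → X) (hf : Continuous f) {ε : ℝ} (hε : 0 < ε) :
    ∃ g : SimpleFunc T X, ∀ t, dist (f t) (g t) < ε := by
  have huc : UniformContinuous f := CompactSpace.uniformContinuous_of_continuous hf
  obtain ⟨δ, hδ, hδ'⟩ := Metric.uniformContinuous_iff.1 huc ε hε
  obtain ⟨s, hs⟩ := IsCompact.elim_finite_subcover isCompact_univ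
    (fun c : T => Metric.ball c δ) (fun c => Metric.isOpen_ball)
    (fun t _ => Set.mem_iUnion.2 ⟨t, Metric.mem_ball_self hδ⟩)
  refine ⟨approxAux f δ s.toList, fun t => ?_⟩
  have ht : ∃ c ∈ s.toList, t ∈ Metric.ball c δ := by
    have := hs (Set.mem_univ t)
    simp only [Set.mem_iUnion] at this
    obtain ⟨c, hc, hmem⟩ := this
    exact ⟨c, Finset.mem_toList.2 hc, hmem⟩
  obtain ⟨c, h1, h2⟩ := approxAux_spec f δ s.toList t ht
  rw [h2]
  exact hδ' h1

lemma exists_approx_of_continuous (f : T → X) (hf : Continuous f) :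
    ∃ g : ℕ → SimpleFunc T X, TendstoUniformly (fun n => ⇑(g n)) f atTop := by
  have h : ∀ n : ℕ, ∃ g : SimpleFunc T X, ∀ t, dist (f t) (g t) < 1 / (n + 1) :=
    fun n => exists_simple_unif_close f hf (by positivity)
  choose G hG using h
  refine ⟨G, Metric.tendstoUniformly_iff.2 fun ε hε => ?_⟩
  obtain ⟨N, hN⟩ := exists_nat_one_div_lt hε
  rw [eventually_atTop]
  refine ⟨N, fun n hn t => ?_⟩
  calc dist (f t) ((G n) t) < 1 / (n + 1) := hG n t
    _ ≤ 1 / (N + 1) := by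
        apply one_div_le_one_div_of_le (by positivity)
        exact_mod_cast Nat.succ_le_succ hn
    _ < ε := hN

end Part6

section Extra

variable {𝕜 T X : Type*} [RCLike 𝕜] [MeasurableSpace T]
  [NormedAddCommGroup X] [InnerProductSpace 𝕜 X]

omit [RCLike 𝕜] [InnerProductSpace 𝕜 X] in
lemma vm_sum_apply {ι : Type*} (σ : ι → VectorMeasure T X) (s : Finset ι) (A : Set T) :
    (∑ i ∈ s, σ i) A = ∑ i ∈ s, σ i A := by
  classical
  induction s using Finset.induction_on with
  | empty => simp [VectorMeasure.zero_apply]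
  | insert a s ha ih =>
    rw [Finset.sum_insert ha, Finset.sum_insert ha, VectorMeasure.add_apply, ih]

lemma sesqInt_zero_measure {f : T → X} {g : ℕ → SimpleFunc T X}
    (hg : TendstoUniformly (fun n => ⇑(g n)) f atTop) :
    sesqInt 𝕜 (0 : VectorMeasure T X) f = 0 := by
  apply sesqInt_eq_of_tendsto _ (by rw [totalVar_zero]; exact ENNReal.zero_ne_top) hg
  simpa [simpleInt_zero_measure] using (tendsto_const_nhds : Tendsto (fun _ : ℕ => (0:𝕜)) atTop _)

end Extra

/-- for `(R_i) ⊂ L(X)` with `Σ ‖R_i‖ < ∞` and Borel maps `ω_i : T → T`,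
for every `ν ∈ cabv(T,X)` the series `Σ_i R_i* ∘ ω_i(ν)` converges absolutely in the
variation norm, and its sum `μ` satisfies `∫ f dμ = Σ_i ∫ (R_i ∘ f ∘ ω_i) dν` for
every continuous `f : T → X`. -/

theorem markov_series_converges {𝕜 T X : Type*} [RCLike 𝕜]
    [MetricSpace T] [CompactSpace T] [MeasurableSpace T] [BorelSpace T]
    [NormedAddCommGroup X] [InnerProductSpace 𝕜 X] [CompleteSpace X]
    (R : ℕ → X →L[𝕜] X) (ω : ℕ → T → T) (hω : ∀ i, Measurable (ω i))
    (hsum : Summable fun i => ‖R i‖)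
    (ν : VectorMeasure T X) (hν : totalVar ν ≠ ⊤) :
    ∃ μ : VectorMeasure T X,
      -- absolute convergence of the series in the variation norm
      (Summable fun i => (totalVar (pushTerm (R i) (ω i) ν)).toReal) ∧
      -- convergence of the partial sums to `μ` in the variation norm
      Tendsto (fun n => totalVar (μ - ∑ i ∈ Finset.range n, pushTerm (R i) (ω i) ν))
        atTop (nhds 0) ∧
      -- the integral identity
      ∀ f : T → X, Continuous f →
        HasSum (fun i => sesqInt 𝕜 ν (fun t => R i (f (ω i t)))) (sesqInt 𝕜 μ f) := by
  classical
  set μs : ℕ → VectorMeasure T X := fun i => pushTerm (R i) (ω i) ν with hμsdef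
  have hμsvar : ∀ i, totalVar (μs i) ≤ (‖R i‖₊ : ℝ≥0∞) * totalVar ν :=
    fun i => totalVar_pushTerm_le (R i) (hω i) ν
  have hRsum : Summable fun i => ‖R i‖₊ := by
    rw [← NNReal.summable_coe]
    simpa [coe_nnnorm] using hsum
  have hRtsum : (∑' i, ((‖R i‖₊ : ℝ≥0∞))) ≠ ⊤ := ENNReal.tsum_coe_ne_top_iff_summable.2 hRsum
  have hC : (∑' i, (‖R i‖₊ : ℝ≥0∞) * totalVar ν) ≠ ⊤ := by
    rw [ENNReal.tsum_mul_right]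
    exact ENNReal.mul_ne_top hRtsum hν
  have hTV : (∑' i, totalVar (μs i)) ≠ ⊤ :=
    ne_top_of_le_ne_top hC (ENNReal.tsum_le_tsum hμsvar)
  have hμsne : ∀ i, totalVar (μs i) ≠ ⊤ :=
    fun i => ne_top_of_le_ne_top (ENNReal.mul_ne_top ENNReal.coe_ne_top hν) (hμsvar i)
  set μ := seriesMeasure μs hTV with hμdef
  have hμvar : totalVar μ ≠ ⊤ := ne_top_of_le_ne_top hTV (totalVar_seriesMeasure_le μs hTV)
  -- summability of total variations
  have hsummable1 : Summable fun i => (totalVar (μs i)).toReal := by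
    apply Summable.of_nonneg_of_le (fun i => ENNReal.toReal_nonneg) (fun i => ?_)
      (hsum.mul_right (totalVar ν).toReal)
    calc (totalVar (μs i)).toReal ≤ ((‖R i‖₊ : ℝ≥0∞) * totalVar ν).toReal :=
          ENNReal.toReal_mono (ENNReal.mul_ne_top ENNReal.coe_ne_top hν) (hμsvar i)
      _ = ‖R i‖ * (totalVar ν).toReal := by
          rw [ENNReal.toReal_mul]
          simp
  -- tail estimates
  have htail : ∀ n : ℕ, (∑' i, totalVar (μs (i + n))) ≠ ⊤ := by
    intro n
    apply ne_top_of_le_ne_top hTV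
    exact ENNReal.tsum_comp_le_tsum_of_injective (add_left_injective n) (fun i => totalVar (μs i))
  have hdiffeq : ∀ n : ℕ, μ - ∑ i ∈ Finset.range n, μs i
      = seriesMeasure (fun i => μs (i + n)) (htail n) := by
    intro n
    apply VectorMeasure.ext
    intro A hA
    rw [VectorMeasure.sub_apply, vm_sum_apply, seriesMeasure_apply, seriesMeasure_apply]
    have hsummA : Summable fun i => μs i A :=
      summable_apply_of_tsum_totalVar_ne_top μs hTV A hA
    have h := Summable.sum_add_tsum_nat_add (f := fun i => μs i A) n hsummA
    rw [← h]
    abel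
  have htendsto0 : Tendsto (fun n => totalVar (μ - ∑ i ∈ Finset.range n, μs i))
      atTop (nhds 0) := by
    have hbound : ∀ n, totalVar (μ - ∑ i ∈ Finset.range n, μs i)
        ≤ ∑' i, (‖R (i + n)‖₊ : ℝ≥0∞) * totalVar ν := by
      intro n
      rw [hdiffeq n]
      exact (totalVar_seriesMeasure_le _ _).trans
        (ENNReal.tsum_le_tsum fun i => hμsvar (i + n))
    have hzero : Tendsto (fun n => ∑' i, (‖R (i + n)‖₊ : ℝ≥0∞) * totalVar ν)
        atTop (nhds 0) := ENNReal.tendsto_sum_nat_add _ hC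
    exact tendsto_of_tendsto_of_tendsto_of_le_of_le tendsto_const_nhds hzero
      (fun n => zero_le) hbound
  -- variation of partial sums is finite
  have hPvar : ∀ n : ℕ, totalVar (∑ i ∈ Finset.range n, μs i) ≠ ⊤ := by
    intro n
    apply ne_top_of_le_ne_top _ (totalVar_sum_le μs (Finset.range n))
    rw [← lt_top_iff_ne_top]
    apply ENNReal.sum_lt_top.2
    intro i _
    exact lt_top_iff_ne_top.2 (hμsne i)
  refine ⟨μ, hsummable1, htendsto0, ?_⟩
  intro f hf
  obtain ⟨g, hg⟩ := exists_approx_of_continuous f hf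
  obtain ⟨c, hc0, hc⟩ : ∃ c : ℝ, 0 ≤ c ∧ ∀ t, ‖f t‖ ≤ c := by
    rcases isEmpty_or_nonempty T with hT | hT
    · exact ⟨0, le_refl 0, fun t => (IsEmpty.false t).elim⟩
    · obtain ⟨t₀, -, ht₀⟩ := isCompact_univ.exists_isMaxOn Set.univ_nonempty
        (hf.norm.continuousOn)
      exact ⟨‖f t₀‖, norm_nonneg _, fun t => ht₀ (Set.mem_univ t)⟩
  -- per-term identity
  have hterm : ∀ i, sesqInt 𝕜 ν (fun t => R i (f (ω i t))) = sesqInt 𝕜 (μs i) f := by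
    intro i
    obtain ⟨L, hL⟩ := exists_tendsto_simpleInt (𝕜 := 𝕜) (μs i) (hμsne i) hg
    rw [sesqInt_eq_of_tendsto (μs i) (hμsne i) hg hL]
    have hgi := tendstoUniformly_comp_map (R i) (hω i) hg
    have hL' : Tendsto (fun n => simpleInt 𝕜 ν (((g n).comp (ω i) (hω i)).map (R i)))
        atTop (nhds L) := by
      apply hL.congr
      intro n
      exact simpleInt_pushTerm (R i) (hω i) ν (g n)
    exact sesqInt_eq_of_tendsto ν hν hgi hL'
  -- summability of the series of integrals
  have hnormle : ∀ i, ‖sesqInt 𝕜 (μs i) f‖ ≤ c * (totalVar (μs i)).toReal :=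
    fun i => norm_sesqInt_le (μs i) (hμsne i) hg hc0 hc
  have hS : Summable fun i => sesqInt 𝕜 (μs i) f :=
    Summable.of_norm_bounded (hsummable1.mul_left c) hnormle
  -- partial sums
  have hfin : ∀ n, sesqInt 𝕜 (∑ i ∈ Finset.range n, μs i) f
      = ∑ i ∈ Finset.range n, sesqInt 𝕜 (μs i) f := by
    intro n
    induction n with
    | zero => simp [sesqInt_zero_measure hg]
    | succ n ih =>
      rw [Finset.sum_range_succ, Finset.sum_range_succ, ← ih]
      exact sesqInt_add_measure _ _ (hPvar n) (hμsne n)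
        (by rw [← Finset.sum_range_succ]; exact hPvar (n + 1)) hg
  have hdiffvar : ∀ n, totalVar (μ - ∑ i ∈ Finset.range n, μs i) ≠ ⊤ := by
    intro n
    rw [hdiffeq n]
    exact ne_top_of_le_ne_top (htail n) (totalVar_seriesMeasure_le _ _)
  have hdiff : ∀ n, sesqInt 𝕜 μ f
      = sesqInt 𝕜 (μ - ∑ i ∈ Finset.range n, μs i) f
        + sesqInt 𝕜 (∑ i ∈ Finset.range n, μs i) f := by
    intro n
    have heq : (μ - ∑ i ∈ Finset.range n, μs i) + ∑ i ∈ Finset.range n, μs i = μ :=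
      sub_add_cancel _ _
    conv_lhs => rw [← heq]
    exact sesqInt_add_measure _ _ (hdiffvar n) (hPvar n) (by rw [heq]; exact hμvar) hg
  have htoReal0 : Tendsto (fun n => (totalVar (μ - ∑ i ∈ Finset.range n, μs i)).toReal)
      atTop (nhds 0) := by
    have := (ENNReal.tendsto_toReal (ENNReal.zero_ne_top)).comp htendsto0
    exact this
  have htend : Tendsto (fun n => ∑ i ∈ Finset.range n, sesqInt 𝕜 (μs i) f)
      atTop (nhds (sesqInt 𝕜 μ f)) := by
    rw [tendsto_iff_norm_sub_tendsto_zero]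
    apply squeeze_zero (fun n => norm_nonneg _)
      (g := fun n => c * (totalVar (μ - ∑ i ∈ Finset.range n, μs i)).toReal)
    · intro n
      rw [← hfin n, norm_sub_rev]
      have h2 : sesqInt 𝕜 μ f - sesqInt 𝕜 (∑ i ∈ Finset.range n, μs i) f
          = sesqInt 𝕜 (μ - ∑ i ∈ Finset.range n, μs i) f := by
        rw [hdiff n]
        ring
      rw [h2]
      exact norm_sesqInt_le _ (hdiffvar n) hg hc0 hc
    · simpa using htoReal0.const_mul c
  have htsum : (∑' i, sesqInt 𝕜 (μs i) f) = sesqInt 𝕜 μ f :=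
    tendsto_nhds_unique hS.hasSum.tendsto_sum_nat htend
  have hfun : (fun i => sesqInt 𝕜 ν (fun t => R i (f (ω i t))))
      = fun i => sesqInt 𝕜 (μs i) f := funext hterm
  rw [hfun, ← htsum]
  exact hS.hasSum
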